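/- arXiv:2008.08935 — 3 statements merged into one kernel-verified Lean document; each statement's English description precedes it below -/
import Mathlib

section
/- For every f in the maximal domain D([Φ,N]) = D(ΦN) ∩ D(NΦ) of the commutator, one has ΦNf − NΦf = i·f. -/
noncomputable section

open MeasureTheory Complex Real AddCircle ContinuousLinearMap
open scoped ENNReal NNReal

namespace GW

/-- The Hilbert space `H = ℓ²(ℕ, ℂ)`. -/
abbrev H : Type := lp (fun _ : ℕ => ℂ) 2

instance fact2pi : Fact (0 < 2 * Real.pi) := ⟨by positivity⟩

/-- The circle `𝕋`, realized as `ℝ / 2πℤ`; the point `θ` corresponds to `e^{iθ}`. -/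
abbrev Circle2 : Type := AddCircle (2 * Real.pi)

/-- Normalized Lebesgue (Haar) measure `dθ/2π` on the circle. -/
abbrev μT : Measure Circle2 := @AddCircle.haarAddCircle (2 * Real.pi) fact2pi

/-- `L²(𝕋)` with respect to normalized Lebesgue measure. -/
abbrev L2T : Type := MeasureTheory.Lp ℂ 2 μT

/-- Extension of an `ℕ`-indexed coefficient sequence to `ℤ` by zero. -/
def extz (f : ℕ → ℂ) : ℤ → ℂ := fun n => if 0 ≤ n then f n.toNat else 0

lemma extz_natCast (f : ℕ → ℂ) (n : ℕ) : extz f (n : ℤ) = f n := by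
  simp [extz]

lemma extz_memℓp (f : H) : Memℓp (extz ⇑f) 2 := by
  apply memℓp_gen
  have hs : Summable fun n : ℕ => ‖(⇑f) n‖ ^ (2 : ℝ≥0∞).toReal :=
    (lp.memℓp f).summable (by norm_num)
  have h0 : ∀ z : ℤ, z ∉ Set.range ((↑·) : ℕ → ℤ) →
      ‖extz ⇑f z‖ ^ (2 : ℝ≥0∞).toReal = 0 := by
    intro z hz
    have hneg : ¬ (0 : ℤ) ≤ z := fun h => hz ⟨z.toNat, by simpa using Int.toNat_of_nonneg h⟩
    simp only [extz, if_neg hneg, norm_zero]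
    rw [Real.zero_rpow (by norm_num)]
  have hinj : Function.Injective ((↑·) : ℕ → ℤ) := fun a b h => by simpa using h
  refine (hinj.summable_iff h0).mp ?_
  refine hs.congr fun n => ?_
  simp [Function.comp, extz_natCast]

/-- The zero-extension `ℓ²(ℕ,ℂ) → ℓ²(ℤ,ℂ)`. -/
def extlp (f : H) : lp (fun _ : ℤ => ℂ) 2 := ⟨extz ⇑f, extz_memℓp f⟩

/-- `J` as a plain function: send `(c_n)_{n∈ℕ}` to `Σ_{n∈ℕ} c_n e^{inθ}` in `L²(𝕋)`,
via the Fourier Hilbert basis of `L²(𝕋)`. -/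
def Jmap (f : H) : L2T := (@fourierBasis (2 * Real.pi) fact2pi).repr.symm (extlp f)

lemma extlp_add (f g : H) : extlp (f + g) = extlp f + extlp g := by
  apply Subtype.ext
  funext n
  show extz (⇑(f + g)) n = extz ⇑f n + extz ⇑g n
  rcases le_or_gt 0 n with h | h
  · simp only [extz, if_pos h]
    exact congrFun (lp.coeFn_add f g) n.toNat
  · simp [extz, if_neg (not_le.mpr h)]

lemma extlp_smul (c : ℂ) (f : H) : extlp (c • f) = c • extlp f := by
  apply Subtype.ext
  funext n
  show extz (⇑(c • f)) n = c • extz ⇑f n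
  rcases le_or_gt 0 n with h | h
  · simp only [extz, if_pos h]
    rw [lp.coeFn_smul]
    rfl
  · simp [extz, if_neg (not_le.mpr h)]

/-- `J` as a linear map. -/
def Jlin : H →ₗ[ℂ] L2T where
  toFun := Jmap
  map_add' f g := show Jmap (f + g) = Jmap f + Jmap g by
    unfold Jmap; rw [extlp_add, map_add]
  map_smul' c f := show Jmap (c • f) = c • Jmap f by
    unfold Jmap; rw [extlp_smul, _root_.map_smul]

lemma norm_extlp (f : H) : ‖extlp f‖ = ‖f‖ := by
  rw [lp.norm_eq_tsum_rpow (by norm_num : 0 < (2 : ℝ≥0∞).toReal) (extlp f),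
    lp.norm_eq_tsum_rpow (by norm_num : 0 < (2 : ℝ≥0∞).toReal) f]
  congr 1
  have hinj : Function.Injective ((↑·) : ℕ → ℤ) := fun a b h => by simpa using h
  have h0 : ∀ z, z ∉ Set.range ((↑·) : ℕ → ℤ) →
      ‖extlp f z‖ ^ (2 : ℝ≥0∞).toReal = 0 := by
    intro z hz
    have hneg : ¬ (0 : ℤ) ≤ z := fun h => hz ⟨z.toNat, by simpa using Int.toNat_of_nonneg h⟩
    show ‖extz ⇑f z‖ ^ (2 : ℝ≥0∞).toReal = 0
    simp only [extz, if_neg hneg, norm_zero]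
    rw [Real.zero_rpow (by norm_num)]
  have hsupp : (Function.support fun z => ‖extlp f z‖ ^ (2 : ℝ≥0∞).toReal) ⊆
      Set.range ((↑·) : ℕ → ℤ) := by
    intro z hz
    by_contra h
    exact hz (h0 z h)
  have key := hinj.tsum_eq (f := fun z => ‖extlp f z‖ ^ (2 : ℝ≥0∞).toReal) hsupp
  rw [← key]
  exact tsum_congr fun n => by
    show ‖extz ⇑f (n : ℤ)‖ ^ (2 : ℝ≥0∞).toReal = _
    rw [extz_natCast]

/-- The isometric embedding `J : H → L²(𝕋)` as a continuous linear map; it maps the `n`-th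
standard basis vector of `ℓ²(ℕ,ℂ)` to `θ ↦ e^{inθ}`, `n ∈ ℕ`. -/
def JH : H →L[ℂ] L2T :=
  LinearMap.mkContinuousOfExistsBound Jlin
    ⟨1, fun f => by
      simp only [Jlin, LinearMap.coe_mk, AddHom.coe_mk, one_mul, Jmap]
      rw [LinearIsometryEquiv.norm_map]
      exact le_of_eq (norm_extlp f)⟩

end GW

namespace GW

/-- The argument function on the circle: `e^{iθ} ↦ θ` with `θ ∈ (−π, π]`, as a `ℂ`-valued
function. -/
def argFun : Circle2 → ℂ :=
  fun x => (((AddCircle.measurableEquivIoc (2 * Real.pi) (-Real.pi) x : Set.Ioc (-Real.pi) (-Real.pi + 2 * Real.pi)) : ℝ) : ℂ)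

lemma argFun_memℒp : MemLp argFun ⊤ μT := by
  apply memLp_top_of_bound (C := Real.pi)
  · exact (Complex.measurable_ofReal.comp (measurable_subtype_coe.comp
      (AddCircle.measurableEquivIoc (2 * Real.pi) (-Real.pi)).measurable)).aestronglyMeasurable
  · refine Filter.Eventually.of_forall fun x => ?_
    have h := (AddCircle.measurableEquivIoc (2 * Real.pi) (-Real.pi) x).2
    have h1 : -Real.pi < ((AddCircle.measurableEquivIoc (2 * Real.pi) (-Real.pi) x : Set.Ioc (-Real.pi) (-Real.pi + 2 * Real.pi)) : ℝ) := h.1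
    have h2 := h.2
    rw [argFun, Complex.norm_real, Real.norm_eq_abs, abs_le]
    constructor
    · linarith
    · linarith

lemma mul_memℒp (φ : Circle2 → ℂ) (hφ : MemLp φ ⊤ μT) (f : L2T) : MemLp (φ • ⇑f) 2 μT :=
  (Lp.memLp f).smul hφ

lemma mul_toLp_add (φ : Circle2 → ℂ) (hφ : MemLp φ ⊤ μT) (f g : L2T) :
    (mul_memℒp φ hφ (f + g)).toLp (φ • ⇑(f + g)) =
      (mul_memℒp φ hφ f).toLp (φ • ⇑f) + (mul_memℒp φ hφ g).toLp (φ • ⇑g) := by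
  rw [MemLp.toLp_congr (mul_memℒp φ hφ (f + g)) ((mul_memℒp φ hφ f).add (mul_memℒp φ hφ g))
    ((Lp.coeFn_add f g).mono fun x hx => by
      simp only [Pi.smul_apply', hx, Pi.add_apply, smul_add])]
  exact MemLp.toLp_add _ _

lemma mul_toLp_smul (φ : Circle2 → ℂ) (hφ : MemLp φ ⊤ μT) (c : ℂ) (f : L2T) :
    (mul_memℒp φ hφ (c • f)).toLp (φ • ⇑(c • f)) = c • (mul_memℒp φ hφ f).toLp (φ • ⇑f) := by
  rw [MemLp.toLp_congr (mul_memℒp φ hφ (c • f)) ((mul_memℒp φ hφ f).const_smul c)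
    ((Lp.coeFn_smul c f).mono fun x hx => by
      rw [Pi.smul_apply', hx, Pi.smul_apply, Pi.smul_apply, Pi.smul_apply', smul_comm])]
  exact MemLp.toLp_const_smul c _

/-- Multiplication by a bounded measurable function, as a linear map on `L²(𝕋)`. -/
def mulLin (φ : Circle2 → ℂ) (hφ : MemLp φ ⊤ μT) : L2T →ₗ[ℂ] L2T where
  toFun f := (mul_memℒp φ hφ f).toLp (φ • ⇑f)
  map_add' f g := mul_toLp_add φ hφ f g
  map_smul' c f := mul_toLp_smul φ hφ c f

/-- Multiplication by a bounded measurable function, as a bounded operator on `L²(𝕋)`. -/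
def mulCLM (φ : Circle2 → ℂ) (hφ : MemLp φ ⊤ μT) : L2T →L[ℂ] L2T :=
  LinearMap.mkContinuousOfExistsBound (mulLin φ hφ)
    ⟨(eLpNorm φ ⊤ μT).toReal, fun f => by
      simp only [mulLin, LinearMap.coe_mk, AddHom.coe_mk]
      rw [Lp.norm_toLp, Lp.norm_def]
      rw [← ENNReal.toReal_mul]
      apply ENNReal.toReal_mono
      · exact ENNReal.mul_ne_top hφ.eLpNorm_ne_top (Lp.memLp f).eLpNorm_ne_top
      · exact eLpNorm_smul_le_mul_eLpNorm (Lp.memLp f).1 hφ.1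
          ⟩

/-- The Garrison–Wong phase operator `Φ = J* ∘ M_arg ∘ J` on `H`. -/
def Phi : H →L[ℂ] H :=
  (ContinuousLinearMap.adjoint JH) ∘L (mulCLM argFun argFun_memℒp) ∘L JH

/-- The domain of the number operator: `{f ∈ H : Σ n² |c_n|² < ∞}`. -/
def domN : Set H := {f : H | Summable fun n : ℕ => (n : ℝ) ^ 2 * ‖f n‖ ^ 2}

lemma Nop_memℓp {f : H} (hf : f ∈ domN) : Memℓp (fun n : ℕ => (n : ℂ) * f n) 2 := by
  apply memℓp_gen
  refine Summable.congr hf fun n => ?_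
  have h2 : ((2 : ℝ≥0∞)).toReal = ((2 : ℕ) : ℝ) := by norm_num
  rw [h2, Real.rpow_natCast]
  simp [norm_mul, mul_pow]

/-- The number operator `N`, defined on its maximal domain `domN`: `(Nf)_n = n·c_n`. -/
def Nop (f : H) (hf : f ∈ domN) : H := ⟨fun n : ℕ => (n : ℂ) * f n, Nop_memℓp hf⟩

/-- The standard orthonormal basis `(e_n)` of `H`. -/
def eH (n : ℕ) : H := lp.single 2 n (1 : ℂ)

lemma norm_exp_mul (x : ℝ) (c : ℂ) : ‖Complex.exp ((x : ℂ) * Complex.I) * c‖ = ‖c‖ := by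
  rw [norm_mul, Complex.norm_exp_ofReal_mul_I, one_mul]

lemma U_memℓp (t : ℝ) (f : H) : Memℓp (fun n : ℕ => Complex.exp (((n * t : ℝ) : ℂ) * Complex.I) * f n) 2 := by
  apply memℓp_gen
  refine Summable.congr ((lp.memℓp f).summable (by norm_num)) fun n => ?_
  rw [norm_exp_mul]

/-- The unitary group `U_t = e^{itN}`: `(U_t f)_n = e^{int} f_n`, as a linear map. -/
def Ulin (t : ℝ) : H →ₗ[ℂ] H where
  toFun f := ⟨fun n : ℕ => Complex.exp (((n * t : ℝ) : ℂ) * Complex.I) * f n, U_memℓp t f⟩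
  map_add' f g := by
    apply Subtype.ext
    funext n
    show Complex.exp _ * (⇑(f + g)) n = _
    rw [lp.coeFn_add]
    show Complex.exp _ * (f n + g n) =
      Complex.exp _ * f n + Complex.exp _ * g n
    ring
  map_smul' c f := by
    apply Subtype.ext
    funext n
    show Complex.exp _ * (⇑(c • f)) n = _
    rw [lp.coeFn_smul]
    show Complex.exp _ * (c * f n) = c * (Complex.exp _ * f n)
    ring

/-- The unitary group `U_t = e^{itN}`: `(U_t f)_n = e^{int} f_n`. -/
def U (t : ℝ) : H →L[ℂ] H :=
  LinearMap.mkContinuousOfExistsBound (Ulin t)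
    ⟨1, fun f => by
      simp only [Ulin, LinearMap.coe_mk, AddHom.coe_mk, one_mul]
      apply le_of_eq
      rw [lp.norm_eq_tsum_rpow (by norm_num : 0 < (2 : ℝ≥0∞).toReal),
        lp.norm_eq_tsum_rpow (by norm_num : 0 < (2 : ℝ≥0∞).toReal) f]
      congr 1
      refine tsum_congr fun n => ?_
      show ‖Complex.exp (((n * t : ℝ) : ℂ) * Complex.I) * f n‖ ^ (2 : ℝ≥0∞).toReal = _
      rw [norm_exp_mul]⟩

/-- The indicator function of a subset of the circle, as a `ℂ`-valued function. -/
def indFun (B : Set Circle2) : Circle2 → ℂ := Set.indicator B (fun _ => (1 : ℂ))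

lemma indFun_memℒp {B : Set Circle2} (hB : MeasurableSet B) : MemLp (indFun B) ⊤ μT := by
  apply memLp_top_of_bound (C := 1)
  · exact (aestronglyMeasurable_const.indicator hB)
  · refine Filter.Eventually.of_forall fun x => ?_
    by_cases h : x ∈ B <;> simp [indFun, h]

open scoped Classical in
/-- The POVM `Q(B) = J* ∘ M_{1_B} ∘ J` obtained by compressing multiplication by the
indicator of `B` to `H` (defined to be `0` for non-measurable `B`). -/
def Qop (B : Set Circle2) : H →L[ℂ] H :=
  if h : MeasurableSet B then
    (ContinuousLinearMap.adjoint JH) ∘L (mulCLM (indFun B) (indFun_memℒp h)) ∘L JH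
  else 0



lemma fourier_eq (n : ℤ) (x : ℝ) :
    (fourier n (↑x : Circle2) : ℂ) = Complex.exp ((n : ℂ) * x * Complex.I) := by
  rw [fourier_coe_apply]
  congr 1
  have hπ : ((Real.pi : ℝ) : ℂ) ≠ 0 := by
    simp only [ne_eq, Complex.ofReal_eq_zero]; positivity
  push_cast
  field_simp

lemma argFun_coe (x : ℝ) (hx : x ∈ Set.Ioc (-Real.pi) (-Real.pi + 2 * Real.pi)) :
    argFun (↑x : Circle2) = (x : ℂ) := by
  have h : (AddCircle.measurableEquivIoc (2 * Real.pi) (-Real.pi)) ↑x = ⟨x, hx⟩ := by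
    show (AddCircle.equivIoc (2 * Real.pi) (-Real.pi)) ↑x = ⟨x, hx⟩
    rw [Equiv.apply_eq_iff_eq_symm_apply]
    rfl
  rw [argFun, h]

lemma exp_int_pi (k : ℤ) : Complex.exp ((k : ℂ) * (Real.pi : ℂ) * Complex.I) = (-1 : ℂ) ^ k := by
  rw [mul_assoc, Complex.exp_int_mul, Complex.exp_pi_mul_I]

lemma neg_one_zpow_neg (k : ℤ) : ((-1 : ℂ)) ^ (-k) = (-1 : ℂ) ^ k := by
  rw [zpow_neg]
  refine inv_eq_of_mul_eq_one_right ?_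
  rw [← mul_zpow]
  norm_num

/-- Fourier coefficients of the argument function. -/
def cc (k : ℤ) : ℂ := fourierCoeff argFun k

lemma cc_eq (k : ℤ) :
    cc k = if k = 0 then 0 else Complex.I * (-1 : ℂ) ^ k / k := by
  have hπ : (0:ℝ) < Real.pi := Real.pi_pos
  set c : ℂ := -(k : ℂ) * Complex.I with hc
  have key : fourierCoeff argFun k =
      (1 / (2 * Real.pi) : ℝ) • ∫ x in (-Real.pi)..Real.pi,
        Complex.exp (c * x) * x := by
    rw [fourierCoeff_eq_intervalIntegral argFun k (-Real.pi)]
    congr 1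
    have hb : -Real.pi + 2 * Real.pi = Real.pi := by ring
    rw [hb]
    rw [intervalIntegral.integral_of_le (by linarith), intervalIntegral.integral_of_le (by linarith)]
    apply setIntegral_congr_fun measurableSet_Ioc
    intro x hx
    have hx' : x ∈ Set.Ioc (-Real.pi) (-Real.pi + 2 * Real.pi) := by rwa [hb]
    show (fourier (-k)) ↑x • argFun ↑x = Complex.exp (c * x) * x
    rw [argFun_coe x hx', fourier_eq, smul_eq_mul, hc]
    congr 2
    push_cast
    ring
  have h1 : ∀ x : ℝ, HasDerivAt (fun x : ℝ => (x : ℂ)) 1 x := fun x => by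
    simpa using (hasDerivAt_id x).ofReal_comp
  by_cases hk : k = 0
  · subst hk
    rw [cc, key, if_pos rfl]
    have hG : ∀ x ∈ Set.uIcc (-Real.pi) Real.pi,
        HasDerivAt (fun x : ℝ => (1/2 : ℂ) * ((x : ℂ) * (x : ℂ))) (Complex.exp (c * x) * x) x := by
      intro x _
      have h2 := ((h1 x).mul (h1 x)).const_mul (1/2 : ℂ)
      refine h2.congr_deriv ?_
      symm
      have : c = 0 := by rw [hc]; norm_num
      rw [this]
      norm_num
      ring
    have hint : IntervalIntegrable (fun x : ℝ => Complex.exp (c * x) * x) MeasureTheory.volume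
        (-Real.pi) Real.pi :=
      ((Complex.continuous_exp.comp (continuous_const.mul Complex.continuous_ofReal)).mul
        Complex.continuous_ofReal).intervalIntegrable _ _
    rw [intervalIntegral.integral_eq_sub_of_hasDerivAt hG hint]
    push_cast
    ring_nf
    simp
  · rw [cc, key, if_neg hk]
    have hkC : (k : ℂ) ≠ 0 := Int.cast_ne_zero.mpr hk
    set F : ℝ → ℂ := fun x => (Complex.I / k * x) * Complex.exp (c * x)
      + (1 / (k : ℂ) ^ 2) * Complex.exp (c * x) with hF
    have hderiv : ∀ x ∈ Set.uIcc (-Real.pi) Real.pi,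
        HasDerivAt F (Complex.exp (c * x) * x) x := by
      intro x _
      have h3 : HasDerivAt (fun x : ℝ => Complex.exp (c * x)) (Complex.exp (c * x) * c) x := by
        have h2 : HasDerivAt (fun x : ℝ => c * x) c x := by simpa using (h1 x).const_mul c
        exact h2.cexp
      have h4 : HasDerivAt (fun x : ℝ => Complex.I / k * x) (Complex.I / k) x := by
        simpa using (h1 x).const_mul (Complex.I / (k : ℂ))
      have h5 := (h4.mul h3).add (h3.const_mul (1 / (k : ℂ) ^ 2))
      refine h5.congr_deriv ?_
      symm
      rw [hc]
      field_simp
      ring_nf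
      linear_combination ((k:ℂ) * x) * Complex.I_sq
    have hint : IntervalIntegrable (fun x : ℝ => Complex.exp (c * x) * x) MeasureTheory.volume
        (-Real.pi) Real.pi :=
      ((Complex.continuous_exp.comp (continuous_const.mul Complex.continuous_ofReal)).mul
        Complex.continuous_ofReal).intervalIntegrable _ _
    rw [intervalIntegral.integral_eq_sub_of_hasDerivAt hderiv hint]
    have e1 : Complex.exp (c * (Real.pi : ℂ)) = (-1 : ℂ) ^ k := by
      rw [hc]
      rw [show -(k : ℂ) * Complex.I * (Real.pi : ℂ) = ((-k : ℤ) : ℂ) * (Real.pi : ℂ) * Complex.I by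
        push_cast; ring]
      rw [exp_int_pi, neg_one_zpow_neg]
    have e2 : Complex.exp (c * ((-Real.pi : ℝ) : ℂ)) = (-1 : ℂ) ^ k := by
      rw [hc]
      rw [show -(k : ℂ) * Complex.I * ((-Real.pi : ℝ) : ℂ) = ((k : ℤ) : ℂ) * (Real.pi : ℂ) * Complex.I by
        push_cast; ring]
      rw [exp_int_pi]
    rw [hF]
    simp only []
    rw [e1, e2]
    have hπC : ((Real.pi : ℝ) : ℂ) ≠ 0 := by
      simp only [ne_eq, Complex.ofReal_eq_zero]; positivity
    rw [Complex.real_smul]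
    push_cast
    field_simp
    ring
lemma repr_Jmap (g : H) :
    (@fourierBasis (2 * Real.pi) fact2pi).repr (Jmap g) = extlp g :=
  LinearIsometryEquiv.apply_symm_apply _ _

lemma JH_apply (g : H) : JH g = Jmap g := rfl

lemma extlp_eH (n : ℕ) : extlp (eH n) = lp.single 2 (n : ℤ) (1 : ℂ) := by
  apply Subtype.ext
  funext m
  show extz (⇑(eH n)) m = (lp.single 2 (n : ℤ) (1 : ℂ) : lp (fun _ : ℤ => ℂ) 2) m
  rcases le_or_gt 0 m with h | h
  · lift m to ℕ using h
    rw [extz_natCast]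
    show (lp.single 2 n (1 : ℂ) : lp (fun _ : ℕ => ℂ) 2) m
      = (lp.single 2 (n : ℤ) (1 : ℂ) : lp (fun _ : ℤ => ℂ) 2) (m : ℤ)
    by_cases hm : m = n
    · subst hm
      rw [lp.single_apply_self, lp.single_apply_self]
    · rw [lp.single_apply_ne _ _ _ hm, lp.single_apply_ne _ _ _ (by exact_mod_cast hm)]
  · rw [show extz (⇑(eH n)) m = 0 from if_neg (not_le.mpr h),
      lp.single_apply_ne _ _ _ (by omega : m ≠ (n : ℤ))]

lemma JH_eH (n : ℕ) : JH (eH n) = (@fourierBasis (2 * Real.pi) fact2pi) ((n : ℤ)) := by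
  apply (@fourierBasis (2 * Real.pi) fact2pi).repr.injective
  rw [HilbertBasis.repr_self, JH_apply, repr_Jmap, extlp_eH]

/-- The function `θ ↦ θ·e^{inθ}` on the circle. -/
def hfun (n : ℤ) : Circle2 → ℂ := fun t => argFun t * fourier n t

lemma argFun_aestronglyMeasurable : AEStronglyMeasurable argFun μT :=
  (Complex.measurable_ofReal.comp (measurable_subtype_coe.comp
      (AddCircle.measurableEquivIoc (2 * Real.pi) (-Real.pi)).measurable)).aestronglyMeasurable

lemma hfun_memℒp_top (n : ℤ) : MemLp (hfun n) ⊤ μT := by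
  apply memLp_top_of_bound (C := Real.pi)
  · exact argFun_aestronglyMeasurable.mul (map_continuous (fourier n)).aestronglyMeasurable
  · refine Filter.Eventually.of_forall fun x => ?_
    have hno : ‖hfun n x‖ = ‖argFun x‖ := by
      rw [hfun, norm_mul]
      have h1 : ‖(fourier n x : ℂ)‖ = 1 := by
        rw [fourier_apply, Circle.norm_coe]
      rw [h1, mul_one]
    rw [hno]
    have h := (AddCircle.measurableEquivIoc (2 * Real.pi) (-Real.pi) x).2
    have h1 : -Real.pi < ((AddCircle.measurableEquivIoc (2 * Real.pi) (-Real.pi) x :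
        Set.Ioc (-Real.pi) (-Real.pi + 2 * Real.pi)) : ℝ) := h.1
    have h2 := h.2
    rw [argFun, Complex.norm_real, Real.norm_eq_abs, abs_le]
    constructor
    · linarith
    · linarith

lemma hfun_memℒp (n : ℤ) : MemLp (hfun n) 2 μT :=
  (hfun_memℒp_top n).mono_exponent le_top

/-- `θ·e^{inθ}` as an element of `L²(𝕋)`. -/
def Hfn (n : ℤ) : L2T := (hfun_memℒp n).toLp (hfun n)

lemma fourierCoeff_congr_ae {f g : Circle2 → ℂ} (h : f =ᵐ[μT] g) (m : ℤ) :
    fourierCoeff f m = fourierCoeff g m :=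
  integral_congr_ae (h.mono fun t ht => by simp only [ht])

lemma fourierCoeff_Hfn (n m : ℤ) : fourierCoeff (⇑(Hfn n)) m = cc (m - n) := by
  unfold Hfn
  rw [fourierCoeff_congr_ae ((hfun_memℒp n).coeFn_toLp) m, cc]
  unfold fourierCoeff
  refine integral_congr_ae (Filter.Eventually.of_forall fun t => ?_)
  show fourier (-m) t • hfun n t = fourier (-(m - n)) t • argFun t
  rw [smul_eq_mul, smul_eq_mul, hfun]
  have h : fourier (-m) t * fourier n t = fourier (-(m - n)) t := by
    rw [← fourier_add]
    congr 1
    ring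
  calc fourier (-m) t * (argFun t * fourier n t)
      = (fourier (-m) t * fourier n t) * argFun t := by ring
    _ = fourier (-(m - n)) t * argFun t := by rw [h]

lemma conj_hfun (n : ℤ) (t : Circle2) :
    (starRingEnd ℂ) (hfun n t) = argFun t * fourier (-n) t := by
  rw [hfun, map_mul, ← fourier_neg]
  congr 1
  rw [argFun]
  exact Complex.conj_ofReal _

lemma inner_Hfn (n : ℤ) (F : L2T) :
    @inner ℂ _ _ (Hfn n) F = fourierCoeff (fun t => argFun t * F t) n := by
  rw [MeasureTheory.L2.inner_def]
  unfold fourierCoeff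
  refine integral_congr_ae ?_
  filter_upwards [(hfun_memℒp n).coeFn_toLp] with t ht
  rw [RCLike.inner_apply]
  unfold Hfn
  rw [ht, conj_hfun, smul_eq_mul]
  ring

lemma mulCLM_apply (φ : Circle2 → ℂ) (hφ : MemLp φ ⊤ μT) (f : L2T) :
    mulCLM φ hφ f = (mul_memℒp φ hφ f).toLp (φ • ⇑f) := rfl

lemma Phi_eq_inner (g : H) (n : ℕ) :
    Phi g n = @inner ℂ _ _ (Hfn (n : ℤ)) (JH g) := by
  have h0 : Phi g n = @inner ℂ _ _ (eH n) (Phi g) := by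
    rw [eH, lp.inner_single_left]
    simp [RCLike.inner_apply]
  rw [h0, Phi, ContinuousLinearMap.comp_apply, ContinuousLinearMap.comp_apply,
    ContinuousLinearMap.adjoint_inner_right, JH_eH,
    ← HilbertBasis.repr_apply_apply, fourierBasis_repr, inner_Hfn]
  apply fourierCoeff_congr_ae
  rw [mulCLM_apply]
  filter_upwards [MemLp.coeFn_toLp (mul_memℒp argFun argFun_memℒp (JH g))] with t ht
  rw [ht, Pi.smul_apply', smul_eq_mul]
lemma Phi_hasSum_int (g : H) (n : ℕ) :
    HasSum (fun m : ℤ => (starRingEnd ℂ) (cc (m - n)) * extz (⇑g) m) (Phi g n) := by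
  rw [Phi_eq_inner]
  have h := lp.hasSum_inner (𝕜 := ℂ)
    ((@fourierBasis (2 * Real.pi) fact2pi).repr (Hfn (n : ℤ)))
    ((@fourierBasis (2 * Real.pi) fact2pi).repr (JH g))
  rw [LinearIsometryEquiv.inner_map_map] at h
  have heq : (fun m : ℤ => (starRingEnd ℂ) (cc (m - n)) * extz (⇑g) m) =
      fun m : ℤ => @inner ℂ _ _
        ((@fourierBasis (2 * Real.pi) fact2pi).repr (Hfn (n : ℤ)) m)
        ((@fourierBasis (2 * Real.pi) fact2pi).repr (JH g) m) := by
    funext m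
    rw [RCLike.inner_apply, fourierBasis_repr, fourierBasis_repr, fourierCoeff_Hfn]
    rw [mul_comm]
    congr 1
    rw [JH_apply]
    have : fourierCoeff (⇑(Jmap g)) m
        = (@fourierBasis (2 * Real.pi) fact2pi).repr (Jmap g) m := by
      rw [fourierBasis_repr]
    rw [this, repr_Jmap]
    rfl
  rw [heq]
  exact h

lemma Phi_hasSum (g : H) (n : ℕ) :
    HasSum (fun m : ℕ => (starRingEnd ℂ) (cc ((m : ℤ) - n)) * g m) (Phi g n) := by
  have h := Phi_hasSum_int g n
  have hinj : Function.Injective ((↑·) : ℕ → ℤ) := fun a b hab => by simpa using hab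
  have h0 : ∀ m : ℤ, m ∉ Set.range ((↑·) : ℕ → ℤ) →
      (starRingEnd ℂ) (cc (m - n)) * extz (⇑g) m = 0 := by
    intro m hm
    have hneg : ¬ (0 : ℤ) ≤ m := fun hle => hm ⟨m.toNat, by simpa using Int.toNat_of_nonneg hle⟩
    rw [show extz (⇑g) m = 0 from if_neg hneg, mul_zero]
  have h2 := (hinj.hasSum_iff h0).mpr h
  refine h2.congr_fun fun m => ?_
  show (starRingEnd ℂ) (cc ((m : ℤ) - n)) * g m
      = (starRingEnd ℂ) (cc ((m : ℤ) - n)) * extz (⇑g) (m : ℤ)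
  rw [extz_natCast]

lemma conj_cc_mul (j : ℤ) : (starRingEnd ℂ) (cc j) * (j : ℂ) =
    if j = 0 then 0 else -Complex.I * (-1 : ℂ) ^ j := by
  rw [cc_eq]
  by_cases hj : j = 0
  · simp [hj]
  · rw [if_neg hj, if_neg hj]
    have hjC : (j : ℂ) ≠ 0 := Int.cast_ne_zero.mpr hj
    rw [map_div₀, map_mul, Complex.conj_I, map_zpow₀, map_neg, map_one, map_intCast]
    field_simp

lemma summable_norm_f {f : H} (hf : f ∈ domN) : Summable fun m : ℕ => ‖f m‖ := by
  rw [← summable_nat_add_iff 1]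
  have h1 : Summable fun m : ℕ => (((m + 1 : ℕ) : ℝ)) ^ 2 * ‖f (m + 1)‖ ^ 2 :=
    (summable_nat_add_iff 1).2 hf
  have h2 : Summable fun m : ℕ => (1 / ((m : ℝ) + 1)) ^ 2 := by
    have h3 : Summable fun m : ℕ => (1 / ((m : ℝ)) ^ 2) :=
      summable_one_div_nat_pow.mpr one_lt_two
    have h4 := (summable_nat_add_iff 1).2 h3
    refine h4.congr fun m => ?_
    push_cast
    rw [div_pow, one_pow]
  have hsum := (h1.add h2).div_const 2
  refine Summable.of_nonneg_of_le (fun m => norm_nonneg _) (fun m => ?_) hsum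
  have hm : (0 : ℝ) < (m : ℝ) + 1 := by positivity
  have key := two_mul_le_add_sq (((m : ℝ) + 1) * ‖f (m + 1)‖) (1 / ((m : ℝ) + 1))
  have e : (((m : ℝ) + 1) * ‖f (m + 1)‖) * (1 / ((m : ℝ) + 1)) = ‖f (m + 1)‖ := by
    field_simp
  push_cast
  nlinarith [norm_nonneg (f (m + 1))]

lemma key_identity {f : H} (hfN : f ∈ domN) (n : ℕ) :
    Phi (Nop f hfN) n - (n : ℂ) * Phi f n =
      (-Complex.I * (-1 : ℂ) ^ n) * (∑' m : ℕ, (-1 : ℂ) ^ m * f m) + Complex.I * f n := by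
  have h1 := Phi_hasSum (Nop f hfN) n
  have h2 := (Phi_hasSum f n).mul_left (n : ℂ)
  have h3 := h1.sub h2
  have hS : HasSum (fun m : ℕ => (-1 : ℂ) ^ m * f m) (∑' m : ℕ, (-1 : ℂ) ^ m * f m) := by
    refine Summable.hasSum (Summable.of_norm ?_)
    refine (summable_norm_f hfN).congr fun m => ?_
    rw [norm_mul, norm_pow, norm_neg, norm_one, one_pow, one_mul]
  have h4 := (hS.mul_left (-Complex.I * (-1 : ℂ) ^ n)).add
    (hasSum_ite_eq n (Complex.I * f n))
  have hfe : (fun m : ℕ => (starRingEnd ℂ) (cc ((m : ℤ) - n)) * (Nop f hfN) m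
      - (n : ℂ) * ((starRingEnd ℂ) (cc ((m : ℤ) - n)) * f m)) =
      fun m : ℕ => (-Complex.I * (-1 : ℂ) ^ n) * ((-1 : ℂ) ^ m * f m)
        + (if m = n then Complex.I * f n else 0) := by
    funext m
    have hNop : (Nop f hfN) m = (m : ℂ) * f m := rfl
    rw [hNop]
    have e1 : (starRingEnd ℂ) (cc ((m : ℤ) - n)) * ((m : ℂ) * f m)
        - (n : ℂ) * ((starRingEnd ℂ) (cc ((m : ℤ) - n)) * f m)
        = ((starRingEnd ℂ) (cc ((m : ℤ) - n)) * (((m : ℤ) - (n : ℤ) : ℤ) : ℂ)) * f m := by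
      push_cast
      ring
    rw [e1, conj_cc_mul]
    by_cases hmn : m = n
    · subst hmn
      rw [if_pos (sub_self (m : ℤ)), if_pos rfl]
      have h5 : (-1 : ℂ) ^ m * (-1 : ℂ) ^ m = 1 := by
        rw [← mul_pow]
        norm_num
      linear_combination (Complex.I * f m) * h5
    · rw [if_neg (fun hc => hmn (by omega)), if_neg hmn, add_zero]
      have h6 : ((-1 : ℂ)) ^ ((m : ℤ) - (n : ℤ)) = (-1 : ℂ) ^ m * (-1 : ℂ) ^ n := by
        rw [sub_eq_add_neg, zpow_add₀ (by norm_num : (-1 : ℂ) ≠ 0), neg_one_zpow_neg,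
          zpow_natCast, zpow_natCast]
      rw [h6]
      ring
  rw [hfe] at h3
  exact h3.unique h4

lemma tendsto_sq_zero {u : ℕ → ℝ} (h : Summable fun n => (u n) ^ 2) (hu : ∀ n, 0 ≤ u n) :
    Filter.Tendsto u Filter.atTop (nhds 0) := by
  have h0 := h.tendsto_atTop_zero
  have h1 : Filter.Tendsto (fun n => Real.sqrt ((u n) ^ 2)) Filter.atTop (nhds (Real.sqrt 0)) :=
    (Real.continuous_sqrt.tendsto 0).comp h0
  rw [Real.sqrt_zero] at h1
  exact Filter.Tendsto.congr (fun n => Real.sqrt_sq (hu n)) h1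

lemma coeff_tendsto (v : H) :
    Filter.Tendsto (fun n : ℕ => ‖v n‖) Filter.atTop (nhds 0) := by
  have hs := (lp.memℓp v).summable (by norm_num : 0 < (2 : ℝ≥0∞).toReal)
  have hs2 : Summable fun n : ℕ => ‖v n‖ ^ 2 := by
    refine hs.congr fun n => ?_
    rw [show ((2 : ℝ≥0∞)).toReal = ((2 : ℕ) : ℝ) by norm_num, Real.rpow_natCast]
  exact tendsto_sq_zero hs2 fun n => norm_nonneg _

lemma S_eq_zero {f : H} (hfN : f ∈ domN) (hfNPhi : Phi f ∈ domN) :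
    (∑' m : ℕ, (-1 : ℂ) ^ m * f m) = 0 := by
  set S := ∑' m : ℕ, (-1 : ℂ) ^ m * f m with hSdef
  have t1 : Filter.Tendsto (fun n : ℕ => Phi (Nop f hfN) n) Filter.atTop (nhds 0) := by
    rw [tendsto_zero_iff_norm_tendsto_zero]
    exact coeff_tendsto (Phi (Nop f hfN))
  have t2 : Filter.Tendsto (fun n : ℕ => (n : ℂ) * Phi f n) Filter.atTop (nhds 0) := by
    rw [tendsto_zero_iff_norm_tendsto_zero]
    have heq : (fun n : ℕ => ‖(n : ℂ) * Phi f n‖) = fun n : ℕ => (n : ℝ) * ‖Phi f n‖ := by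
      funext n
      rw [norm_mul, Complex.norm_natCast]
    rw [heq]
    refine tendsto_sq_zero ?_ fun n => by positivity
    refine hfNPhi.congr fun n => ?_
    rw [mul_pow]
  have t3 : Filter.Tendsto (fun n : ℕ => Complex.I * f n) Filter.atTop (nhds 0) := by
    rw [tendsto_zero_iff_norm_tendsto_zero]
    have heq : (fun n : ℕ => ‖Complex.I * f n‖) = fun n : ℕ => ‖f n‖ := by
      funext n
      rw [norm_mul, Complex.norm_I, one_mul]
    rw [heq]
    exact coeff_tendsto f
  have t4 : Filter.Tendsto (fun n : ℕ => (-Complex.I * (-1 : ℂ) ^ n) * S)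
      Filter.atTop (nhds 0) := by
    have heq : (fun n : ℕ => (-Complex.I * (-1 : ℂ) ^ n) * S) =
        fun n : ℕ => (Phi (Nop f hfN) n - (n : ℂ) * Phi f n) - Complex.I * f n := by
      funext n
      rw [key_identity hfN n]
      ring
    rw [heq]
    simpa using (t1.sub t2).sub t3
  have t5 : Filter.Tendsto (fun n : ℕ => ‖(-Complex.I * (-1 : ℂ) ^ n) * S‖)
      Filter.atTop (nhds 0) := by
    simpa using t4.norm
  have heq : (fun n : ℕ => ‖(-Complex.I * (-1 : ℂ) ^ n) * S‖) = fun _ : ℕ => ‖S‖ := by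
    funext n
    rw [norm_mul, norm_mul, norm_neg, Complex.norm_I, one_mul, norm_pow, norm_neg, norm_one,
      one_pow, one_mul]
  rw [heq] at t5
  have h0 : ‖S‖ = 0 := tendsto_nhds_unique tendsto_const_nhds t5
  exact norm_eq_zero.mp h0
/-- (Proposition `prop:Heisenberg-main1`.) For every `f` in the maximal domain
`D([Φ,N]) = D(ΦN) ∩ D(NΦ)` of the commutator (`D(ΦN) = D(N)` since `Φ` is bounded), one has
`ΦNf − NΦf = i·f`. -/
theorem heisenberg_on_maximal_domain (f : H) (hfN : f ∈ domN) (hfNPhi : Phi f ∈ domN) :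
    Phi (Nop f hfN) - Nop (Phi f) hfNPhi = Complex.I • f := by
  have hS := S_eq_zero hfN hfNPhi
  apply Subtype.ext
  funext n
  have hk := key_identity hfN n
  rw [hS, mul_zero, zero_add] at hk
  have hsub := congrFun (lp.coeFn_sub (Phi (Nop f hfN)) (Nop (Phi f) hfNPhi)) n
  have hsmul := congrFun (lp.coeFn_smul Complex.I f) n
  show (⇑(Phi (Nop f hfN) - Nop (Phi f) hfNPhi)) n = (⇑(Complex.I • f)) n
  rw [hsub, hsmul, Pi.sub_apply, Pi.smul_apply, smul_eq_mul]
  have hNop : (Nop (Phi f) hfNPhi) n = (n : ℂ) * Phi f n := rfl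
  rw [hNop]
  exact hk

end GW
end
end

section
/- Let (c_n)_{n∈ℕ} be a sequence of complex numbers satisfying (i) Σ_{n∈ℕ} n²|c_n|² < ∞ and (ii) Σ_{n∈ℕ} n²·|Σ_{m∈ℕ, m≠n} ((−1)^{m−n}/(m−n))·c_m|² < ∞. Then Σ_{n∈ℕ} (−1)^n c_n = 0. -/
open Filter Topology

lemma aux_one_le_norm {m n : ℕ} (h : m ≠ n) : (1:ℝ) ≤ ‖(m:ℂ) - (n:ℂ)‖ := by
  have h0 : ((m:ℂ) - (n:ℂ)) = (((m:ℤ) - (n:ℤ) : ℤ) : ℂ) := by push_cast; ring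
  have h1 : ((m:ℤ) - (n:ℤ)) ≠ 0 := sub_ne_zero.mpr (by exact_mod_cast h)
  rw [h0, Complex.norm_intCast]
  exact_mod_cast Int.one_le_abs h1

lemma aux_norm_eq {m n : ℕ} : ‖(m:ℂ) - (n:ℂ)‖ = |(m:ℝ) - (n:ℝ)| := by
  have h0 : ((m:ℂ) - (n:ℂ)) = (((m:ℝ) - (n:ℝ) : ℝ) : ℂ) := by push_cast; ring
  rw [h0]; exact RCLike.norm_ofReal _

noncomputable def wfun : ℤ → ℝ := fun j => if j = 0 then 0 else 1/(j:ℝ)^2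

lemma wfun_nonneg (j : ℤ) : 0 ≤ wfun j := by
  unfold wfun; split <;> positivity

lemma wfun_summable : Summable wfun := by
  have h : Summable fun j : ℤ => 1/(j:ℝ)^2 := by
    have := Real.summable_one_div_int_pow.mpr (by norm_num : 1 < 2)
    exact this
  apply h.of_norm_bounded
  intro j
  unfold wfun
  by_cases hj : j = 0
  · simp [hj]
  · rw [if_neg hj, Real.norm_eq_abs, abs_of_nonneg (by positivity)]

lemma aux_m_le {m n : ℕ} (hmn : m ≠ n) : (m:ℝ) ≤ ((n:ℝ)+1) * ‖(m:ℂ)-(n:ℂ)‖ := by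
  rw [aux_norm_eq]
  have hm0 : (0:ℝ) ≤ (m:ℝ) := Nat.cast_nonneg m
  have hn0 : (0:ℝ) ≤ (n:ℝ) := Nat.cast_nonneg n
  rcases lt_or_gt_of_ne hmn with h | h
  · have h2 : (1:ℝ) ≤ (n:ℝ) - m := by
      have : m + 1 ≤ n := h
      have := (Nat.cast_le (α := ℝ)).mpr this
      push_cast at this; linarith
    rw [abs_sub_comm, abs_of_nonneg (by linarith)]
    nlinarith [mul_le_mul_of_nonneg_left h2 (show (0:ℝ) ≤ (n:ℝ)+1 by positivity)]
  · have h2 : (1:ℝ) ≤ (m:ℝ) - n := by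
      have : n + 1 ≤ m := h
      have := (Nat.cast_le (α := ℝ)).mpr this
      push_cast at this; linarith
    rw [abs_of_nonneg (by linarith)]
    nlinarith [mul_nonneg hn0 (show (0:ℝ) ≤ (m:ℝ) - n - 1 by linarith)]

set_option maxHeartbeats 1000000 in
lemma tendsto_r (b : ℕ → ℂ)
    (hb_sum : Summable fun m => ‖b m‖)
    (hA2 : Summable fun m : ℕ => ((m:ℝ) * ‖b m‖)^2) :
    Tendsto (fun n : ℕ => ∑' m : ℕ, (if m = n then 0 else (m:ℂ) * b m / ((m:ℂ)-(n:ℂ))))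
      atTop (nhds 0) := by
  set A : ℕ → ℝ := fun m => (m:ℝ) * ‖b m‖ with hA_def
  have hA_nonneg : ∀ m, 0 ≤ A m := fun m => by positivity
  set g : ℕ → ℕ → ℂ := fun n m => if m = n then 0 else (m:ℂ) * b m / ((m:ℂ)-(n:ℂ)) with hg_def
  have hgnorm : ∀ n m, ‖g n m‖ = if m = n then 0 else A m / ‖(m:ℂ)-(n:ℂ)‖ := by
    intro n m
    by_cases hmn : m = n
    · simp [hg_def, hmn]
    · rw [hg_def]; simp only [if_neg hmn]
      rw [norm_div, norm_mul, Complex.norm_natCast]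
  have hgn_sum : ∀ n, Summable fun m => ‖g n m‖ := by
    intro n
    apply ((hb_sum.mul_left ((n:ℝ)+1))).of_nonneg_of_le (fun m => norm_nonneg _)
    intro m
    rw [hgnorm]
    by_cases hmn : m = n
    · rw [if_pos hmn]; positivity
    · rw [if_neg hmn]
      have hs1 : (1:ℝ) ≤ ‖(m:ℂ)-(n:ℂ)‖ := aux_one_le_norm hmn
      have hs0 : (0:ℝ) < ‖(m:ℂ)-(n:ℂ)‖ := lt_of_lt_of_le one_pos hs1
      rw [div_le_iff₀ hs0]
      have hm := aux_m_le hmn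
      show (m:ℝ) * ‖b m‖ ≤ ((n:ℝ)+1) * ‖b m‖ * ‖(m:ℂ)-(n:ℂ)‖
      nlinarith [mul_le_mul_of_nonneg_right hm (norm_nonneg (b m))]
  -- the u function
  set u : ℕ → ℕ → ℝ := fun n m => if m = n then 0 else 1/‖(m:ℂ)-(n:ℂ)‖^2 with hu_def
  have huw : ∀ n m, u n m = wfun ((m:ℤ) - (n:ℤ)) := by
    intro n m
    by_cases hmn : m = n
    · simp [hu_def, hmn, wfun]
    · have hj : ((m:ℤ) - (n:ℤ)) ≠ 0 := sub_ne_zero.mpr (by exact_mod_cast hmn)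
      rw [hu_def]
      simp only [if_neg hmn, wfun, if_neg hj]
      congr 1
      rw [aux_norm_eq, sq_abs]
      push_cast
      ring
  set K : ℝ := ∑' j : ℤ, wfun j with hK_def
  have hK0 : 0 ≤ K := tsum_nonneg wfun_nonneg
  have hu_sum : ∀ n M : ℕ, Summable fun m : ℕ => u n (m + M) := by
    intro n M
    have hinj : Function.Injective (fun m : ℕ => ((m + M : ℕ):ℤ) - (n:ℤ)) := by
      intro a b hab
      simp only at hab
      omega
    have := wfun_summable.comp_injective hinj
    apply this.congr
    intro m
    exact (huw n (m + M)).symm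
  have hu_le : ∀ n M : ℕ, (∑' m : ℕ, u n (m + M)) ≤ K := by
    intro n M
    have hinj : Function.Injective (fun m : ℕ => ((m + M : ℕ):ℤ) - (n:ℤ)) := by
      intro a b hab
      simp only at hab
      omega
    apply Summable.tsum_le_tsum_of_inj _ hinj (fun j _ => wfun_nonneg j)
      (fun m => le_of_eq (huw n (m + M))) (hu_sum n M) wfun_summable
  -- AM-GM bound
  have hamgm : ∀ δ : ℝ, 0 < δ → ∀ n m : ℕ,
      ‖g n m‖ ≤ (δ⁻¹ * A m^2 + δ * u n m)/2 := by
    intro δ hδ n m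
    rw [hgnorm, hu_def]
    by_cases hmn : m = n
    · simp only [if_pos hmn]
      positivity
    · simp only [if_neg hmn]
      have hs1 : (1:ℝ) ≤ ‖(m:ℂ)-(n:ℂ)‖ := aux_one_le_norm hmn
      have hs0 : (0:ℝ) < ‖(m:ℂ)-(n:ℂ)‖ := lt_of_lt_of_le one_pos hs1
      set s : ℝ := ‖(m:ℂ)-(n:ℂ)‖
      set x : ℝ := A m
      have hx : 0 ≤ x := hA_nonneg m
      have hδδ : δ⁻¹ * δ = 1 := inv_mul_cancel₀ (ne_of_gt hδ)
      have hv : 0 < 1/s := by positivity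
      have h1s : x / s = x * (1/s) := by ring
      have h2s : 1/s^2 = (1/s)^2 := by rw [div_pow, one_pow]
      rw [h1s, h2s]
      set v : ℝ := 1/s
      have expand : δ⁻¹*(x - δ*v)^2 = δ⁻¹*x^2 - 2*(δ⁻¹*δ)*(x*v) + (δ⁻¹*δ)*(δ*v^2) := by ring
      rw [hδδ] at expand
      have h3 : 0 ≤ δ⁻¹*(x - δ*v)^2 := by positivity
      rw [expand] at h3
      linarith
  -- main argument
  rw [NormedAddCommGroup.tendsto_nhds_zero]
  intro ε hε
  set δ : ℝ := ε/(4*(K+1)) with hδ_def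
  have hδ : 0 < δ := by positivity
  -- choose M
  have htail := tendsto_sum_nat_add (fun m => A m ^ 2)
  obtain ⟨M, hM⟩ := (htail.eventually (gt_mem_nhds (show (0:ℝ) < δ^2 by positivity))).exists
  set C : ℝ := ∑ m ∈ Finset.range M, A m with hC_def
  have hC0 : 0 ≤ C := Finset.sum_nonneg (fun m _ => hA_nonneg m)
  filter_upwards [eventually_ge_atTop (M + ⌈2*C/ε⌉₊ + 1)] with n hn
  have hnM : M ≤ n := by omega
  -- head bound
  have hd0 : (0:ℝ) < (n:ℝ) - M + 1 := by
    have : (M:ℝ) ≤ n := Nat.cast_le.mpr hnM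
    linarith
  have hhead : (∑ m ∈ Finset.range M, ‖g n m‖) ≤ C / ((n:ℝ) - M + 1) := by
    rw [hC_def, Finset.sum_div]
    apply Finset.sum_le_sum
    intro m hm
    rw [Finset.mem_range] at hm
    have hmn : m ≠ n := by omega
    rw [hgnorm, if_neg hmn]
    have hle : (n:ℝ) - M + 1 ≤ ‖(m:ℂ)-(n:ℂ)‖ := by
      rw [aux_norm_eq, abs_sub_comm, abs_of_nonneg]
      · have h1 : (m:ℝ) ≤ (M:ℝ) - 1 := by
          have : m + 1 ≤ M := hm
          have := (Nat.cast_le (α := ℝ)).mpr this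
          push_cast at this; linarith
        linarith
      · have : (m:ℝ) ≤ (n:ℝ) := Nat.cast_le.mpr (by omega)
        linarith
    exact div_le_div_of_nonneg_left (hA_nonneg m) hd0 hle
  -- tail bound
  have hAtail_sum : Summable fun m : ℕ => A (m + M)^2 := by
    have := (summable_nat_add_iff M).mpr hA2
    exact this
  have hbound_sum : Summable fun m : ℕ => (δ⁻¹ * A (m+M)^2 + δ * u n (m+M))/2 := by
    apply Summable.div_const
    exact (hAtail_sum.mul_left _).add ((hu_sum n M).mul_left _)
  have htail_le : (∑' m : ℕ, ‖g n (m + M)‖)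
      ≤ (δ⁻¹ * (∑' m : ℕ, A (m+M)^2) + δ * (∑' m : ℕ, u n (m+M)))/2 := by
    calc (∑' m : ℕ, ‖g n (m + M)‖)
        ≤ ∑' m : ℕ, (δ⁻¹ * A (m+M)^2 + δ * u n (m+M))/2 := by
          apply Summable.tsum_le_tsum (fun m => hamgm δ hδ n (m+M)) _ hbound_sum
          exact (summable_nat_add_iff M).mpr (hgn_sum n)
      _ = (δ⁻¹ * (∑' m : ℕ, A (m+M)^2) + δ * (∑' m : ℕ, u n (m+M)))/2 := by
          rw [tsum_div_const, Summable.tsum_add (hAtail_sum.mul_left _) ((hu_sum n M).mul_left _),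
            tsum_mul_left, tsum_mul_left]
  have htail2 : (∑' m : ℕ, ‖g n (m + M)‖) ≤ ε/8 + ε/8 := by
    apply htail_le.trans
    have h1 : δ⁻¹ * (∑' m : ℕ, A (m+M)^2) ≤ δ⁻¹ * δ^2 := by
      apply mul_le_mul_of_nonneg_left (le_of_lt hM) (by positivity)
    have h2 : δ * (∑' m : ℕ, u n (m+M)) ≤ δ * K := by
      apply mul_le_mul_of_nonneg_left (hu_le n M) (le_of_lt hδ)
    have h3 : δ⁻¹ * δ^2 = δ := by
      rw [sq, ← mul_assoc, inv_mul_cancel₀ (ne_of_gt hδ), one_mul]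
    have h4 : δ * K ≤ δ * (K + 1) := by nlinarith
    have h5 : δ * (K+1) = ε/4 := by
      rw [hδ_def]
      field_simp
    have h6 : δ ≤ ε/4 := by
      rw [← h5]; nlinarith
    linarith
  -- head is small
  have hhead2 : C / ((n:ℝ) - M + 1) ≤ ε/2 := by
    rw [div_le_iff₀ hd0]
    have hceil : (2*C/ε : ℝ) ≤ (⌈2*C/ε⌉₊ : ℝ) := Nat.le_ceil _
    have hnn : ((M + ⌈2*C/ε⌉₊ + 1 : ℕ) : ℝ) ≤ (n:ℝ) := Nat.cast_le.mpr hn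
    push_cast at hnn
    have hd : 2*C/ε + 1 ≤ (n:ℝ) - M + 1 := by linarith
    have hmul : ε * (2*C/ε) = 2*C := by field_simp
    nlinarith [mul_le_mul_of_nonneg_left hd (le_of_lt hε)]
  -- assemble
  calc ‖∑' m : ℕ, g n m‖ ≤ ∑' m : ℕ, ‖g n m‖ := norm_tsum_le_tsum_norm (hgn_sum n)
    _ = (∑ m ∈ Finset.range M, ‖g n m‖) + ∑' m : ℕ, ‖g n (m + M)‖ :=
        (Summable.sum_add_tsum_nat_add M (hgn_sum n)).symm
    _ ≤ C / ((n:ℝ) - M + 1) + (ε/8 + ε/8) := add_le_add hhead htail2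
    _ ≤ ε/2 + (ε/8 + ε/8) := by linarith
    _ < ε := by linarith

set_option maxHeartbeats 2000000 in
/-- (Cancellation result.) Let `(c_n)` be a sequence of complex numbers with
(i) `Σ_n n²|c_n|² < ∞` and
(ii) `Σ_n n²·|Σ_{m ≠ n} ((−1)^{m−n}/(m−n))·c_m|² < ∞`.
Then `Σ_n (−1)^n c_n = 0`. -/
theorem alternating_sum_eq_zero_of_summable (c : ℕ → ℂ)
    (h1 : Summable fun n : ℕ => (n : ℝ) ^ 2 * ‖c n‖ ^ 2)
    (h2 : Summable fun n : ℕ =>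
      (n : ℝ) ^ 2 *
        ‖∑' m : {m : ℕ // m ≠ n},
            ((-1 : ℂ) ^ (((m : ℕ) : ℤ) - (n : ℤ)) / (((m : ℕ) : ℂ) - (n : ℂ))) * c m‖ ^ 2) :
    ∑' n : ℕ, (-1 : ℂ) ^ n * c n = 0 := by
  set b : ℕ → ℂ := fun m => (-1 : ℂ) ^ m * c m with hb_def
  have hnb : ∀ m, ‖b m‖ = ‖c m‖ := by
    intro m
    simp [hb_def, norm_mul, norm_pow]
  -- summability of norms of c
  have hc_sum : Summable fun n => ‖c n‖ := by
    rw [← summable_nat_add_iff 1]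
    have hs1 : Summable fun n : ℕ => ((n+1 : ℕ) : ℝ) ^ 2 * ‖c (n+1)‖ ^ 2 :=
      (summable_nat_add_iff 1).mpr h1
    have hs2 : Summable fun n : ℕ => 1 / ((n:ℝ)+1) ^ 2 := by
      have := (summable_nat_add_iff 1).mpr (Real.summable_one_div_nat_pow.mpr one_lt_two)
      apply this.congr
      intro n
      push_cast
      ring
    apply (hs1.add hs2).of_nonneg_of_le (fun n => norm_nonneg _)
    intro n
    set t : ℝ := (n:ℝ)+1 with ht_def
    set x : ℝ := ‖c (n+1)‖ with hx_def
    have htpos : (0:ℝ) < t := by positivity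
    have hx : (0:ℝ) ≤ x := norm_nonneg _
    have hty : t * (1/t) = 1 := by field_simp
    have expand : (t*x - 1/t)^2 = t^2*x^2 - 2*(t*(1/t))*x + (1/t)^2 := by ring
    have h5 : 0 ≤ t^2*x^2 - 2*x + (1/t)^2 := by
      have h6 := sq_nonneg (t*x - 1/t)
      rw [expand, hty] at h6
      linarith
    have hcast : ((n+1 : ℕ) : ℝ) = t := by rw [ht_def]; push_cast; ring
    have hy2 : (1/t)^2 = 1/t^2 := by rw [div_pow, one_pow]
    rw [hcast]
    show x ≤ t ^ 2 * x ^ 2 + 1 / t ^ 2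
    linarith [hy2]
  have hb_sum : Summable fun n => ‖b n‖ := by simpa [hnb] using hc_sum
  have hbS : Summable b := hb_sum.of_norm
  -- the sequence t
  set t : ℕ → ℂ := fun n => ∑' m : ℕ, (if m = n then 0 else b m / ((m:ℂ) - (n:ℂ))) with ht_def
  -- summability of p n
  have hp_sum : ∀ n : ℕ, Summable fun m : ℕ => (if m = n then 0 else b m / ((m:ℂ) - (n:ℂ))) := by
    intro n
    apply Summable.of_norm
    apply hb_sum.of_nonneg_of_le (fun m => norm_nonneg _)
    intro m
    by_cases hmn : m = n
    · simp [hmn]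
    · rw [if_neg hmn, norm_div]
      calc ‖b m‖ / ‖(m:ℂ) - (n:ℂ)‖ ≤ ‖b m‖ / 1 :=
            div_le_div_of_nonneg_left (norm_nonneg _) one_pos (aux_one_le_norm hmn) |>.trans (le_of_eq rfl)
        _ = ‖b m‖ := div_one _
  -- connect h2 with t
  have hsub_eq : ∀ n : ℕ, (∑' m : {m : ℕ // m ≠ n},
      ((-1 : ℂ) ^ (((m : ℕ) : ℤ) - (n : ℤ)) / (((m : ℕ) : ℂ) - (n : ℂ))) * c m)
        = (-1:ℂ)^n * t n := by
    intro n
    have key : ∀ m : ℕ, m ≠ n →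
        ((-1 : ℂ) ^ ((m : ℤ) - (n : ℤ)) / ((m : ℂ) - (n : ℂ))) * c m
          = (-1:ℂ)^n * (b m / ((m:ℂ) - (n:ℂ))) := by
      intro m hm
      have hz : (-1 : ℂ) ^ ((m : ℤ) - (n : ℤ)) = (-1:ℂ)^m * (-1:ℂ)^n := by
        rw [zpow_sub₀ (by norm_num : (-1:ℂ) ≠ 0), zpow_natCast, zpow_natCast,
          div_eq_mul_inv, ← inv_pow, inv_neg, inv_one]
      rw [hz, hb_def]
      ring
    have hsub := tsum_subtype {m : ℕ | m ≠ n}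
      (fun m => ((-1 : ℂ) ^ ((m : ℤ) - (n : ℤ)) / ((m : ℂ) - (n : ℂ))) * c m)
    rw [ht_def]
    erw [hsub, ← tsum_mul_left]
    apply tsum_congr
    intro m
    by_cases hm : m = n
    · simp [hm, Set.indicator_apply]
    · rw [Set.indicator_apply]
      rw [if_pos (by exact hm : m ∈ {m : ℕ | m ≠ n}), if_neg hm, key m hm]
  have h2' : Summable fun n : ℕ => (n : ℝ) ^ 2 * ‖t n‖ ^ 2 := by
    apply h2.congr
    intro n
    rw [hsub_eq n, norm_mul, norm_pow, norm_neg, norm_one, one_pow, one_mul]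
  -- n * t n → 0
  have htend_t : Tendsto (fun n : ℕ => (n:ℂ) * t n) atTop (nhds 0) := by
    have h0 : Tendsto (fun n : ℕ => (n : ℝ) ^ 2 * ‖t n‖ ^ 2) atTop (nhds 0) :=
      h2'.tendsto_atTop_zero
    have hh1 : Tendsto (fun n : ℕ => ((n : ℝ) * ‖t n‖) ^ 2) atTop (nhds 0) := by
      apply h0.congr; intro n; rw [mul_pow]
    have hh2 : Tendsto (fun n : ℕ => (n : ℝ) * ‖t n‖) atTop (nhds 0) := by
      have h3 := hh1.sqrt
      rw [Real.sqrt_zero] at h3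
      apply h3.congr
      intro n
      exact Real.sqrt_sq (by positivity)
    rw [tendsto_zero_iff_norm_tendsto_zero]
    apply hh2.congr
    intro n
    rw [norm_mul, Complex.norm_natCast]
  -- b n → 0
  have htend_b : Tendsto b atTop (nhds 0) := hbS.tendsto_atTop_zero
  -- r n
  set g : ℕ → ℕ → ℂ := fun n m => (if m = n then 0 else (m:ℂ) * b m / ((m:ℂ) - (n:ℂ))) with hg_def
  have hg_eq : ∀ n m, g n m = (n:ℂ) * (if m = n then 0 else b m / ((m:ℂ) - (n:ℂ)))
      + (if m = n then 0 else b m) := by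
    intro n m
    by_cases hmn : m = n
    · simp [hg_def, hmn]
    · have hne : (m:ℂ) - (n:ℂ) ≠ 0 := by
        intro h0
        exact absurd (aux_one_le_norm hmn) (by rw [h0]; norm_num)
      simp only [hg_def, if_neg hmn]
      field_simp
      ring
  have hq_sum : ∀ n : ℕ, Summable fun m : ℕ => (if m = n then 0 else b m) := by
    intro n
    apply Summable.of_norm
    apply hb_sum.of_nonneg_of_le (fun m => norm_nonneg _)
    intro m
    by_cases hmn : m = n <;> simp [hmn]
  have hg_sum : ∀ n : ℕ, Summable (g n) := by
    intro n
    have := ((hp_sum n).mul_left ((n:ℕ):ℂ)).add (hq_sum n)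
    apply this.congr
    intro m
    exact (hg_eq n m).symm
  set r : ℕ → ℂ := fun n => ∑' m, g n m with hr_def
  have hqt : ∀ n : ℕ, (∑' m : ℕ, (if m = n then 0 else b m)) = (∑' m, b m) - b n := by
    intro n
    have hsingle : HasSum (fun m => if m = n then b n else 0) (b n) := hasSum_ite_eq n (b n)
    have hsplit : (fun m => b m)
        = fun m => (if m = n then b n else 0) + (if m = n then 0 else b m) := by
      funext m; by_cases hmn : m = n <;> simp [hmn]
    have : (∑' m, b m) = b n + ∑' m, (if m = n then 0 else b m) := by
      rw [hsplit, Summable.tsum_add hsingle.summable (hq_sum n), hsingle.tsum_eq]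
    rw [this]; ring
  have hr_eq : ∀ n : ℕ, r n = (n:ℂ) * t n + ((∑' m, b m) - b n) := by
    intro n
    rw [hr_def]
    simp only
    rw [tsum_congr (hg_eq n), Summable.tsum_add ((hp_sum n).mul_left _) (hq_sum n),
      tsum_mul_left, hqt n]
  -- r n → 0
  have hA2 : Summable fun m : ℕ => ((m:ℝ) * ‖b m‖)^2 := by
    apply h1.congr
    intro m
    rw [hnb, mul_pow]
  have htend_r : Tendsto r atTop (nhds 0) := by
    have := tendsto_r b hb_sum hA2
    apply this.congr
    intro n
    rfl
  -- conclude
  have hS : (∑' m, b m) = 0 := by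
    have : Tendsto (fun n : ℕ => r n - (n:ℂ) * t n + b n) atTop (nhds 0) := by
      simpa using (htend_r.sub htend_t).add htend_b
    have heq : (fun n : ℕ => r n - (n:ℂ) * t n + b n) = fun _ => (∑' m, b m) := by
      funext n
      rw [hr_eq n]; ring
    rw [heq] at this
    exact tendsto_nhds_unique tendsto_const_nhds this
  simpa [hb_def] using hS
end

section
/- There is no bounded linear operator T on H = ℓ²(ℕ, ℂ) with the following two properties: (i) T maps D(N) into D(N); (ii) TNf − NTf = i·f for all f ∈ D(N). -/
noncomputable section

open Complex
open scoped ENNReal NNReal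

namespace GW

lemma eH_zero_mem : eH 0 ∈ domN := by
  have : (fun n : ℕ => (n : ℝ) ^ 2 * ‖eH 0 n‖ ^ 2) = fun _ => 0 := by
    funext n
    rcases eq_or_ne n 0 with h | h
    · simp [h]
    · rw [eH, lp.single_apply_ne 2 0 _ h]
      simp
  rw [domN, Set.mem_setOf_eq, this]
  exact summable_zero

lemma Nop_eH_zero (h : eH 0 ∈ domN) : Nop (eH 0) h = 0 := by
  apply Subtype.ext
  funext n
  show (n : ℂ) * eH 0 n = 0
  rcases eq_or_ne n 0 with h | h
  · simp [h]
  · rw [eH, lp.single_apply_ne 2 0 _ h, mul_zero]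

/-- There is no bounded linear operator `T` on `H = ℓ²(ℕ,ℂ)` such that
(i) `T` maps `D(N)` into `D(N)` and (ii) `TNf − NTf = i·f` for all `f ∈ D(N)`. -/
theorem no_bounded_heisenberg_partner :
    ¬ ∃ (T : H →L[ℂ] H) (hT : ∀ f ∈ domN, T f ∈ domN),
        ∀ (f : H) (hf : f ∈ domN),
          T (Nop f hf) - Nop (T f) (hT f hf) = Complex.I • f := by
  rintro ⟨T, hT, hcomm⟩
  have h0 := eH_zero_mem
  have heq := hcomm (eH 0) h0
  rw [Nop_eH_zero h0, map_zero, zero_sub] at heq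
  have hcoord := congrArg (fun g : H => g 0) heq
  simp only at hcoord
  have hl : (-(Nop (T (eH 0)) (hT _ h0)) : H) 0 = 0 := by
    rw [lp.coeFn_neg]
    show -((0 : ℕ) * T (eH 0) 0 : ℂ) = 0
    simp
  have hr : (Complex.I • eH 0 : H) 0 = Complex.I := by
    rw [lp.coeFn_smul]
    show Complex.I • (eH 0) 0 = Complex.I
    rw [eH, lp.single_apply_self]
    simp
  rw [hl, hr] at hcoord
  exact Complex.I_ne_zero hcoord.symm


end GW
end
end
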